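/- Let δ > 0, let M ∈ ℕ with M > 100, and let φ : ℝ → ℝ be continuous with φ(x+1) = φ(x) + Mδ for all x ∈ ℝ. For k ∈ ℤ define E_k = {s ∈ [0,2] : kδ ≤ φ(s) ≤ (k+1)δ} and N_k = E_{k−1} ∪ E_k ∪ E_{k+1}. Suppose there exist m ∈ ℕ, indices k_1 < k_2 < ⋯ < k_m in ℤ, and positive lengths τ_1, …, τ_m ≤ 1 such that for each 1 ≤ i ≤ m: |E_{k_i} ∩ (1−τ_i, 1)| > 0.03·τ_i and |(0, τ_i) ∖ (E_{k_i−M−1} ∪ E_{k_i−M} ∪ E_{k_i−M+1})| > 0.03·τ_i. Then ∬_{{(s,t) ∈ [0,2]×[0,2] : |φ(s)−φ(t)| > δ}} ds dt / |s−t|² ≥ 10^{−6}·m. -/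
import Mathlib
set_option maxHeartbeats 1000000

open MeasureTheory Set
open scoped ENNReal

private lemma stmt13_meas (φ : ℝ → ℝ) (hφ : Continuous φ) (a b : ℝ) :
    MeasurableSet {s ∈ Icc (0:ℝ) 2 | a ≤ φ s ∧ φ s ≤ b} := by
  have h : {s ∈ Icc (0:ℝ) 2 | a ≤ φ s ∧ φ s ≤ b} = Icc 0 2 ∩ φ ⁻¹' (Icc a b) := by
    ext s; simp [Set.mem_Icc, Set.mem_sep_iff]
  rw [h]
  exact measurableSet_Icc.inter (hφ.measurable measurableSet_Icc)

theorem stmt13 (δ : ℝ) (hδ : 0 < δ) (M : ℕ) (hM : 100 < M) (φ : ℝ → ℝ)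
    (hφ : Continuous φ) (hper : ∀ x : ℝ, φ (x + 1) = φ x + (M : ℝ) * δ)
    (m : ℕ) (k : ℕ → ℤ) (τ : ℕ → ℝ)
    (hmono : ∀ i, 1 ≤ i → i < m → k i < k (i + 1))
    (hτ : ∀ i, 1 ≤ i → i ≤ m → 0 < τ i ∧ τ i ≤ 1)
    (hfull : ∀ i, 1 ≤ i → i ≤ m →
      (volume ({s ∈ Icc (0:ℝ) 2 | (k i : ℝ) * δ ≤ φ s ∧ φ s ≤ ((k i : ℝ) + 1) * δ} ∩
        Ioo (1 - τ i) 1)).toReal > 0.03 * τ i)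
    (hempty : ∀ i, 1 ≤ i → i ≤ m →
      (volume (Ioo (0:ℝ) (τ i) \
        ({s ∈ Icc (0:ℝ) 2 | ((k i - M - 1 : ℤ) : ℝ) * δ ≤ φ s ∧
            φ s ≤ (((k i - M - 1 : ℤ) : ℝ) + 1) * δ} ∪
         {s ∈ Icc (0:ℝ) 2 | ((k i - M : ℤ) : ℝ) * δ ≤ φ s ∧
            φ s ≤ (((k i - M : ℤ) : ℝ) + 1) * δ} ∪
         {s ∈ Icc (0:ℝ) 2 | ((k i - M + 1 : ℤ) : ℝ) * δ ≤ φ s ∧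
            φ s ≤ (((k i - M + 1 : ℤ) : ℝ) + 1) * δ}))).toReal > 0.03 * τ i) :
    ENNReal.ofReal ((10 : ℝ) ^ (-6 : ℤ) * m) ≤
      ∫⁻ p in {p : ℝ × ℝ | p.1 ∈ Icc (0:ℝ) 2 ∧ p.2 ∈ Icc (0:ℝ) 2 ∧ δ < |φ p.1 - φ p.2|},
        ENNReal.ofReal (1 / |p.1 - p.2| ^ 2) := by
  classical
  set f : ℝ × ℝ → ℝ≥0∞ := fun p => ENNReal.ofReal (1 / |p.1 - p.2| ^ 2) with hf
  set S : Set (ℝ × ℝ) :=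
    {p : ℝ × ℝ | p.1 ∈ Icc (0:ℝ) 2 ∧ p.2 ∈ Icc (0:ℝ) 2 ∧ δ < |φ p.1 - φ p.2|} with hS
  -- the rectangles
  set A : ℕ → Set ℝ := fun i =>
    {s ∈ Icc (0:ℝ) 2 | (k i : ℝ) * δ ≤ φ s ∧ φ s ≤ ((k i : ℝ) + 1) * δ} ∩ Ioo (1 - τ i) 1
    with hA
  set D : ℕ → Set ℝ := fun i => Ioo (0:ℝ) (τ i) \
        ({s ∈ Icc (0:ℝ) 2 | ((k i - M - 1 : ℤ) : ℝ) * δ ≤ φ s ∧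
            φ s ≤ (((k i - M - 1 : ℤ) : ℝ) + 1) * δ} ∪
         {s ∈ Icc (0:ℝ) 2 | ((k i - M : ℤ) : ℝ) * δ ≤ φ s ∧
            φ s ≤ (((k i - M : ℤ) : ℝ) + 1) * δ} ∪
         {s ∈ Icc (0:ℝ) 2 | ((k i - M + 1 : ℤ) : ℝ) * δ ≤ φ s ∧
            φ s ≤ (((k i - M + 1 : ℤ) : ℝ) + 1) * δ}) with hD
  set B : ℕ → Set ℝ := fun i => (fun x : ℝ => x - 1) ⁻¹' D i with hB
  set R : ℕ → Set (ℝ × ℝ) := fun i => A i ×ˢ B i with hR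
  -- measurability
  have hmA : ∀ i, MeasurableSet (A i) := fun i =>
    (stmt13_meas φ hφ _ _).inter measurableSet_Ioo
  have hmD : ∀ i, MeasurableSet (D i) := fun i =>
    measurableSet_Ioo.diff (((stmt13_meas φ hφ _ _).union (stmt13_meas φ hφ _ _)).union
      (stmt13_meas φ hφ _ _))
  have hmB : ∀ i, MeasurableSet (B i) := fun i =>
    (hmD i).preimage (measurable_id.sub measurable_const)
  have hmR : ∀ i, MeasurableSet (R i) := fun i => (hmA i).prod (hmB i)
  -- volume lower bounds
  have hvolA : ∀ i, 1 ≤ i → i ≤ m → ENNReal.ofReal (0.03 * τ i) ≤ volume (A i) := by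
    intro i h1 h2
    exact ENNReal.ofReal_le_of_le_toReal (le_of_lt (hfull i h1 h2))
  have hvolB : ∀ i, 1 ≤ i → i ≤ m → ENNReal.ofReal (0.03 * τ i) ≤ volume (B i) := by
    intro i h1 h2
    have hBD : volume (B i) = volume (D i) := by
      have := measure_preimage_add_right (volume : Measure ℝ) (-1) (D i)
      simpa [hB, sub_eq_add_neg] using this
    rw [hBD]
    exact ENNReal.ofReal_le_of_le_toReal (le_of_lt (hempty i h1 h2))
  -- rectangles sit in the integration region
  have hsub : ∀ i, 1 ≤ i → i ≤ m → R i ⊆ S := by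
    rintro i h1 h2 ⟨s, t⟩ ⟨hsA, htB⟩
    obtain ⟨hτ1, hτ2⟩ := hτ i h1 h2
    simp only [hA, Set.mem_inter_iff, Set.mem_sep_iff, Set.mem_Ioo] at hsA
    obtain ⟨⟨hs02, hφ1, hφ2⟩, hs1, hs2⟩ := hsA
    simp only [hB, hD, Set.mem_preimage, Set.mem_diff, Set.mem_Ioo, Set.mem_union,
      Set.mem_sep_iff] at htB
    obtain ⟨⟨ht1, ht2⟩, htE⟩ := htB
    have ht02 : t - 1 ∈ Icc (0:ℝ) 2 := ⟨by linarith, by linarith⟩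
    push_neg at htE
    obtain ⟨⟨hE1, hE2⟩, hE3⟩ := htE
    have hne1 := hE1 ht02
    have hne2 := hE2 ht02
    have hne3 := hE3 ht02
    push_cast at hne1 hne2 hne3
    have hpert : φ t = φ (t - 1) + (M : ℝ) * δ := by
      have := hper (t - 1)
      simpa using this
    have hcase : φ (t - 1) < ((k i : ℝ) - M - 1) * δ ∨ ((k i : ℝ) - M + 2) * δ < φ (t - 1) := by
      rcases lt_or_ge (φ (t - 1)) (((k i : ℝ) - M - 1) * δ) with h | h
      · exact Or.inl h
      · have h1 := hne1 h
        have h2 := hne2 (by linarith)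
        have h3 := hne3 (by linarith)
        exact Or.inr (by linarith)
    refine ⟨⟨hs02.1, hs02.2⟩, ⟨by linarith, by linarith⟩, ?_⟩
    rcases hcase with hc | hc
    · have : δ < φ s - φ t := by rw [hpert]; push_cast; nlinarith
      exact lt_of_lt_of_le this (le_abs_self _)
    · have : δ < -(φ s - φ t) := by rw [hpert]; push_cast; nlinarith
      exact lt_of_lt_of_le this (neg_le_abs _)
  -- integral lower bound on each rectangle
  have hlow : ∀ i, 1 ≤ i → i ≤ m →
      ENNReal.ofReal (9 / 40000 : ℝ) ≤ ∫⁻ p in R i, f p := by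
    intro i h1 h2
    obtain ⟨hτ1, hτ2⟩ := hτ i h1 h2
    have hc : ∀ p ∈ R i, ENNReal.ofReal (1 / (2 * τ i) ^ 2) ≤ f p := by
      rintro ⟨s, t⟩ ⟨hsA, htB⟩
      simp only [hA, Set.mem_inter_iff, Set.mem_Ioo] at hsA
      simp only [hB, hD, Set.mem_preimage, Set.mem_diff, Set.mem_Ioo] at htB
      obtain ⟨_, hs1, hs2⟩ := hsA
      obtain ⟨⟨ht1, ht2⟩, _⟩ := htB
      have hst : |s - t| ≤ 2 * τ i := by
        rw [abs_le]; constructor <;> linarith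
      have hstpos : 0 < |s - t| := abs_pos.mpr (by intro h; linarith [sub_eq_zero.mp h])
      apply ENNReal.ofReal_le_ofReal
      apply one_div_le_one_div_of_le (by positivity)
      nlinarith [abs_nonneg (s - t)]
    calc ENNReal.ofReal (9 / 40000 : ℝ)
        = ENNReal.ofReal (1 / (2 * τ i) ^ 2 * (0.03 * τ i * (0.03 * τ i))) := by
          congr 1
          field_simp
          ring
      _ ≤ ENNReal.ofReal (1 / (2 * τ i) ^ 2) *
            (ENNReal.ofReal (0.03 * τ i) * ENNReal.ofReal (0.03 * τ i)) := by
          rw [← ENNReal.ofReal_mul (by positivity), ← ENNReal.ofReal_mul (by positivity)]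
      _ ≤ ENNReal.ofReal (1 / (2 * τ i) ^ 2) * (volume (A i) * volume (B i)) := by
          exact mul_le_mul_right (mul_le_mul' (hvolA i h1 h2) (hvolB i h1 h2)) _
      _ = ENNReal.ofReal (1 / (2 * τ i) ^ 2) * volume (R i) := by
          rw [hR]
          simp only []
          rw [Measure.volume_eq_prod ℝ ℝ, Measure.prod_prod]
      _ = ∫⁻ _ in R i, ENNReal.ofReal (1 / (2 * τ i) ^ 2) := (setLIntegral_const _ _).symm
      _ ≤ ∫⁻ p in R i, f p := setLIntegral_mono' (hmR i) hc
  -- odd index set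
  set S0 : Finset ℕ := (Finset.range ((m + 1) / 2)).image (fun j => 2 * j + 1) with hS0
  have hmem : ∀ i ∈ S0, 1 ≤ i ∧ i ≤ m := by
    intro i hi
    simp only [hS0, Finset.mem_image, Finset.mem_range] at hi
    obtain ⟨j, hj, rfl⟩ := hi
    omega
  have hcard : S0.card = (m + 1) / 2 := by
    rw [hS0, Finset.card_image_of_injective _ (fun a b h => by omega), Finset.card_range]
  -- growth of k
  have hk : ∀ d : ℕ, ∀ i, 1 ≤ i → i + d ≤ m → k i + d ≤ k (i + d) := by
    intro d
    induction d with
    | zero => intro i _ _; simp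
    | succ d ih =>
      intro i h1 h2
      have ha := ih i h1 (by omega)
      have hb := hmono (i + d) (by omega) (by omega)
      have he : i + (d + 1) = (i + d) + 1 := by omega
      rw [he]
      push_cast
      push_cast at ha
      omega
  -- disjointness
  have hdisjR : ∀ i j, 1 ≤ i → j ≤ m → i + 2 ≤ j → Disjoint (R i) (R j) := by
    intro i j hi hj hij
    rw [Set.disjoint_left]
    rintro ⟨s, t⟩ ⟨hsi, _⟩ ⟨hsj, _⟩
    simp only [hA, Set.mem_inter_iff, Set.mem_sep_iff] at hsi hsj
    have hkij : k i + (j - i : ℕ) ≤ k j := by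
      have := hk (j - i) i hi (by omega)
      rwa [show i + (j - i) = j from by omega] at this
    have hkij' : (k i : ℝ) + 2 ≤ (k j : ℝ) := by
      have : k i + 2 ≤ k j := by omega
      exact_mod_cast this
    obtain ⟨⟨_, _, h2⟩, _⟩ := hsi
    obtain ⟨⟨_, h3, _⟩, _⟩ := hsj
    nlinarith
  have hpd : Set.PairwiseDisjoint (↑S0) R := by
    intro i hi j hj hij
    obtain ⟨hi1, hi2⟩ := hmem i (by exact_mod_cast hi)
    obtain ⟨hj1, hj2⟩ := hmem j (by exact_mod_cast hj)
    simp only [hS0, Finset.coe_image, Finset.coe_range, Set.mem_image, Set.mem_Iio] at hi hj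
    obtain ⟨a, _, rfl⟩ := hi
    obtain ⟨b, _, rfl⟩ := hj
    rcases lt_or_gt_of_ne hij with h | h
    · exact hdisjR _ _ hi1 hj2 (by omega)
    · exact (hdisjR _ _ hj1 hi2 (by omega)).symm
  -- put it together
  calc ENNReal.ofReal ((10 : ℝ) ^ (-6 : ℤ) * m)
      ≤ ENNReal.ofReal (9 / 40000 * S0.card) := by
        apply ENNReal.ofReal_le_ofReal
        rw [hcard]
        have hcast : (m : ℝ) ≤ 2 * (((m + 1) / 2 : ℕ) : ℝ) := by
          have : m ≤ 2 * ((m + 1) / 2) := by omega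
          exact_mod_cast this
        nlinarith
    _ = ∑ _i ∈ S0, ENNReal.ofReal (9 / 40000 : ℝ) := by
        rw [Finset.sum_const, nsmul_eq_mul, ← ENNReal.ofReal_natCast S0.card,
          ← ENNReal.ofReal_mul (Nat.cast_nonneg S0.card), mul_comm]
    _ ≤ ∑ i ∈ S0, ∫⁻ p in R i, f p :=
        Finset.sum_le_sum fun i hi => hlow i (hmem i hi).1 (hmem i hi).2
    _ = ∫⁻ p in ⋃ i ∈ S0, R i, f p :=
        (lintegral_biUnion_finset hpd (fun i _ => hmR i) f).symm
    _ ≤ ∫⁻ p in S, f p := by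
        apply lintegral_mono_set
        exact Set.iUnion₂_subset fun i hi => hsub i (hmem i hi).1 (hmem i hi).2
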